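/- Let p, m, q_l, q_r be natural numbers, S ∈ ℂ^{2×2} Hermitian positive definite, and d_F ∈ ℝ with d_F > 0. Define D_l ∈ ℂ^{(p+m+p+q_l)×(p+m+p+q_l)} and D_r ∈ ℂ^{(m+p+m+q_r)×(m+p+m+q_r)} by the block patterns D_l = [[S₁₁·I_p, 0, S₁₂·I_p, 0],[0, d_F·I_m, 0, 0],[S₂₁·I_p, 0, S₂₂·I_p, 0],[0, 0, 0, I_{q_l}]] and D_r = [[S₁₁·I_m, 0, S₁₂·I_m, 0],[0, d_F·I_p, 0, 0],[S₂₁·I_m, 0, S₂₂·I_m, 0],[0, 0, 0, I_{q_r}]]. Then D_l and D_r are Hermitian positive definite, and for every block-diagonal Δ = diag(Δ₁, Δ₂, Δ₁, Δ₃) with Δ₁ ∈ ℂ^{m×p}, Δ₂ ∈ ℂ^{p×m}, Δ₃ ∈ ℂ^{q_r×q_l} (where the first and third diagonal blocks are the same matrix Δ₁), the unique positive-definite square roots satisfy D_r^{1/2}·Δ = Δ·D_l^{1/2}. -/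

import Mathlib

open Matrix
open scoped ComplexOrder Kronecker

/-- `Matrix.PosSemidef.sqrt` as it stood in Mathlib of December 2024 (since removed). -/
noncomputable def Matrix.PosSemidef.sqrt {n : Type*} [Fintype n] [DecidableEq n]
    {A : Matrix n n ℂ} (hA : A.PosSemidef) : Matrix n n ℂ :=
  hA.isHermitian.eigenvectorUnitary.1 * diagonal ((↑) ∘ (√·) ∘ hA.isHermitian.eigenvalues) *
    (star hA.isHermitian.eigenvectorUnitary : Matrix n n ℂ)

section SqrtPort
open scoped MatrixOrder

lemma Matrix.PosSemidef.sqrt_eq_cfc {n : Type*} [Fintype n] [DecidableEq n]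
    {A : Matrix n n ℂ} (hA : A.PosSemidef) : hA.sqrt = CFC.sqrt A := by
  have h0 : 0 ≤ A := Matrix.nonneg_iff_posSemidef.2 hA
  rw [CFC.sqrt_eq_real_sqrt A h0, cfcₙ_eq_cfc, hA.isHermitian.cfc_eq]
  rfl

lemma Matrix.PosSemidef.posSemidef_sqrt {n : Type*} [Fintype n] [DecidableEq n]
    {A : Matrix n n ℂ} (hA : A.PosSemidef) : hA.sqrt.PosSemidef := by
  rw [hA.sqrt_eq_cfc]
  exact Matrix.nonneg_iff_posSemidef.1 (CFC.sqrt_nonneg A)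

lemma Matrix.PosSemidef.sqrt_mul_self {n : Type*} [Fintype n] [DecidableEq n]
    {A : Matrix n n ℂ} (hA : A.PosSemidef) : hA.sqrt * hA.sqrt = A := by
  rw [hA.sqrt_eq_cfc]
  exact CFC.sqrt_mul_sqrt_self A (Matrix.nonneg_iff_posSemidef.2 hA)

lemma Matrix.PosSemidef.eq_sqrt_of_sq_eq {n : Type*} [Fintype n] [DecidableEq n]
    {A : Matrix n n ℂ} (hA : A.PosSemidef) {B : Matrix n n ℂ} (hB : B.PosSemidef)
    (hAB : A ^ 2 = B) : A = hB.sqrt := by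
  rw [hB.sqrt_eq_cfc]
  exact (CFC.sqrt_unique (by rw [← sq]; exact hAB) (Matrix.nonneg_iff_posSemidef.2 hA)).symm

end SqrtPort

section Aux

private lemma posDef_smul_one {n : Type*} [Fintype n] [DecidableEq n] {c : ℂ} (hc : 0 < c) :
    (c • (1 : Matrix n n ℂ)).PosDef := by
  rw [smul_one_eq_diagonal]
  exact posDef_diagonal_iff.2 fun _ => hc

private lemma posDef_submatrix_equiv {n m' : Type*} [Fintype n] [Fintype m'] [DecidableEq n]
    [DecidableEq m'] {M : Matrix n n ℂ} (hM : M.PosDef) (e : m' ≃ n) :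
    (M.submatrix e e).PosDef := by
  refine Matrix.PosDef.of_dotProduct_mulVec_pos (hM.1.submatrix e) fun x hx => ?_
  rw [submatrix_mulVec_equiv]
  have key : star x ⬝ᵥ ((M *ᵥ (x ∘ e.symm)) ∘ ⇑e) = star (x ∘ ⇑e.symm) ⬝ᵥ (M *ᵥ (x ∘ ⇑e.symm)) := by
    simp only [dotProduct, Function.comp, Pi.star_apply]
    exact (Fintype.sum_equiv e _ _ fun i => by simp)
  rw [key]
  refine hM.dotProduct_mulVec_pos (fun h => hx ?_)
  funext i
  have := congrFun h (e i)
  simpa using this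

private lemma posDef_fromBlocks_diag {n m' : Type*} [Fintype n] [Fintype m'] [DecidableEq n]
    [DecidableEq m'] {A : Matrix n n ℂ} {D : Matrix m' m' ℂ} (hA : A.PosDef) (hD : D.PosDef) :
    (fromBlocks A 0 0 D).PosDef := by
  refine Matrix.PosDef.of_dotProduct_mulVec_pos ?_ fun x hx => ?_
  · unfold Matrix.IsHermitian
    rw [fromBlocks_conjTranspose]
    simp [hA.1.eq, hD.1.eq]
  · have hx' : x = Sum.elim (x ∘ Sum.inl) (x ∘ Sum.inr) := by funext i; cases i <;> rfl
    rw [hx', fromBlocks_mulVec, Function.star_sumElim, sumElim_dotProduct_sumElim,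
      zero_mulVec, zero_mulVec, add_zero, zero_add]
    by_cases h1 : x ∘ Sum.inl = 0
    · have h2 : x ∘ Sum.inr ≠ 0 := by
        intro h2; apply hx; funext i
        cases i with
        | inl i => exact congrFun h1 i
        | inr i => exact congrFun h2 i
      exact add_pos_of_nonneg_of_pos (hA.posSemidef.dotProduct_mulVec_nonneg _) (hD.dotProduct_mulVec_pos h2)
    · exact add_pos_of_pos_of_nonneg (hA.dotProduct_mulVec_pos h1) (hD.posSemidef.dotProduct_mulVec_nonneg _)

private lemma quadform_kronecker_one {n : Type*} [Fintype n] [DecidableEq n] (p : ℕ)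
    (T : Matrix n n ℂ) (x : n × Fin p → ℂ) :
    star x ⬝ᵥ ((T ⊗ₖ (1 : Matrix (Fin p) (Fin p) ℂ)) *ᵥ x) =
      ∑ i : Fin p, star (fun a => x (a, i)) ⬝ᵥ (T *ᵥ fun a => x (a, i)) := by
  simp only [dotProduct, mulVec, Pi.star_apply, kroneckerMap_apply, one_apply, mul_ite,
    mul_one, mul_zero, ite_mul, zero_mul, Fintype.sum_prod_type, Finset.sum_ite_eq,
    Finset.mem_univ, if_true]
  rw [Finset.sum_comm]

private lemma posDef_kronecker_one {n : Type*} [Fintype n] [DecidableEq n] (p : ℕ)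
    {T : Matrix n n ℂ} (hT : T.PosDef) :
    (T ⊗ₖ (1 : Matrix (Fin p) (Fin p) ℂ)).PosDef := by
  refine Matrix.PosDef.of_dotProduct_mulVec_pos ?_ fun x hx => ?_
  · show _ = _
    ext ⟨a, i⟩ ⟨b, j⟩
    simp only [conjTranspose_apply, kroneckerMap_apply, one_apply, apply_ite, map_zero, mul_ite, mul_one, mul_zero, ite_mul, zero_mul]
    split_ifs with h <;> simp_all [hT.1.apply, eq_comm]
  · rw [quadform_kronecker_one]
    obtain ⟨⟨a, i⟩, hai⟩ : ∃ z, x z ≠ 0 := by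
      by_contra h; push_neg at h; exact hx (funext h)
    refine Finset.sum_pos' (fun j _ => hT.posSemidef.dotProduct_mulVec_nonneg _) ⟨i, Finset.mem_univ i, hT.dotProduct_mulVec_pos ?_⟩
    intro h
    exact hai (congrFun h a)

private lemma posSemidef_kronecker_one {n : Type*} [Fintype n] [DecidableEq n] (p : ℕ)
    {T : Matrix n n ℂ} (hT : T.PosSemidef) :
    (T ⊗ₖ (1 : Matrix (Fin p) (Fin p) ℂ)).PosSemidef := by
  refine Matrix.PosSemidef.of_dotProduct_mulVec_nonneg ?_ fun x => ?_
  · show _ = _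
    ext ⟨a, i⟩ ⟨b, j⟩
    simp only [conjTranspose_apply, kroneckerMap_apply, one_apply, apply_ite, map_zero, mul_ite, mul_one, mul_zero, ite_mul, zero_mul]
    split_ifs with h <;> simp_all [hT.1.apply, eq_comm]
  · rw [quadform_kronecker_one]
    exact Finset.sum_nonneg fun j _ => hT.dotProduct_mulVec_nonneg _

private lemma posSemidef_fromBlocks_diag {n m' : Type*} [Fintype n] [Fintype m'] [DecidableEq n]
    [DecidableEq m'] {A : Matrix n n ℂ} {D : Matrix m' m' ℂ}
    (hA : A.PosSemidef) (hD : D.PosSemidef) :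
    (fromBlocks A 0 0 D).PosSemidef := by
  refine Matrix.PosSemidef.of_dotProduct_mulVec_nonneg ?_ fun x => ?_
  · unfold Matrix.IsHermitian
    rw [fromBlocks_conjTranspose]
    simp [hA.1.eq, hD.1.eq]
  · have hx' : x = Sum.elim (x ∘ Sum.inl) (x ∘ Sum.inr) := by funext i; cases i <;> rfl
    rw [hx', fromBlocks_mulVec, Function.star_sumElim, sumElim_dotProduct_sumElim,
      zero_mulVec, zero_mulVec, add_zero, zero_add]
    exact add_nonneg (hA.dotProduct_mulVec_nonneg _) (hD.dotProduct_mulVec_nonneg _)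

end Aux

section Pat

private def patEquiv (a b q : ℕ) :
    ((Fin a ⊕ Fin b) ⊕ (Fin a ⊕ Fin q)) ≃ ((Fin 2 × Fin a) ⊕ (Fin b ⊕ Fin q)) where
  toFun := Sum.elim (Sum.elim (fun i => .inl (0, i)) (fun j => .inr (.inl j)))
    (Sum.elim (fun i => .inl (1, i)) (fun k => .inr (.inr k)))
  invFun := fun z => match z with
    | .inl (c, i) => if c = 0 then .inl (.inl i) else .inr (.inl i)
    | .inr (.inl j) => .inl (.inr j)
    | .inr (.inr k) => .inr (.inr k)
  left_inv := by rintro ((i | j) | (i | k)) <;> simp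
  right_inv := by
    rintro (⟨c, i⟩ | (j | k))
    · fin_cases c <;> simp
    · rfl
    · rfl

private def pat (a b q : ℕ) (T : Matrix (Fin 2) (Fin 2) ℂ) (c : ℂ) :
    Matrix ((Fin a ⊕ Fin b) ⊕ (Fin a ⊕ Fin q)) ((Fin a ⊕ Fin b) ⊕ (Fin a ⊕ Fin q)) ℂ :=
  fromBlocks (fromBlocks (T 0 0 • 1) 0 0 (c • 1)) (fromBlocks (T 0 1 • 1) 0 0 0)
    (fromBlocks (T 1 0 • 1) 0 0 0) (fromBlocks (T 1 1 • 1) 0 0 1)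

private lemma pat_eq_submatrix (a b q : ℕ) (T : Matrix (Fin 2) (Fin 2) ℂ) (c : ℂ) :
    pat a b q T c =
      (fromBlocks (T ⊗ₖ (1 : Matrix (Fin a) (Fin a) ℂ)) 0 0
        (fromBlocks (c • 1 : Matrix (Fin b) (Fin b) ℂ) 0 0 (1 : Matrix (Fin q) (Fin q) ℂ))
        ).submatrix (patEquiv a b q) (patEquiv a b q) := by
  ext (⟨i | j⟩ | ⟨i | k⟩) (⟨i' | j'⟩ | ⟨i' | k'⟩) <;>
    simp [pat, patEquiv, one_apply, Prod.ext_iff, mul_ite]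

private lemma pat_posDef (a b q : ℕ) {T : Matrix (Fin 2) (Fin 2) ℂ} (hT : T.PosDef)
    {c : ℂ} (hc : 0 < c) : (pat a b q T c).PosDef := by
  rw [pat_eq_submatrix]
  exact posDef_submatrix_equiv
    (posDef_fromBlocks_diag (posDef_kronecker_one a hT)
      (posDef_fromBlocks_diag (posDef_smul_one hc) Matrix.PosDef.one)) _

private lemma pat_posSemidef (a b q : ℕ) {T : Matrix (Fin 2) (Fin 2) ℂ} (hT : T.PosSemidef)
    {c : ℂ} (hc : 0 ≤ c) : (pat a b q T c).PosSemidef := by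
  rw [pat_eq_submatrix]
  refine Matrix.PosSemidef.submatrix ?_ _
  refine posSemidef_fromBlocks_diag (posSemidef_kronecker_one a hT)
    (posSemidef_fromBlocks_diag ?_ Matrix.PosSemidef.one)
  rw [smul_one_eq_diagonal]
  exact Matrix.posSemidef_diagonal_iff.2 fun _ => hc

private lemma pat_mul (a b q : ℕ) (T T' : Matrix (Fin 2) (Fin 2) ℂ) (c c' : ℂ) :
    pat a b q T c * pat a b q T' c' = pat a b q (T * T') (c * c') := by
  simp only [pat, fromBlocks_multiply, Matrix.smul_mul, Matrix.mul_smul, smul_smul,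
    Matrix.one_mul, Matrix.mul_one, Matrix.zero_mul, Matrix.mul_zero, add_zero, zero_add,
    fromBlocks_add, Matrix.mul_apply, Fin.sum_univ_two, add_smul, smul_zero, mul_comm]

private lemma pat_comm (a b a' b' q q' : ℕ) (T : Matrix (Fin 2) (Fin 2) ℂ) (c : ℂ)
    (Δ₁ : Matrix (Fin a') (Fin a) ℂ) (Δ₂ : Matrix (Fin b') (Fin b) ℂ)
    (Δ₃ : Matrix (Fin q') (Fin q) ℂ) :
    pat a' b' q' T c * fromBlocks (fromBlocks Δ₁ 0 0 Δ₂) 0 0 (fromBlocks Δ₁ 0 0 Δ₃) =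
      fromBlocks (fromBlocks Δ₁ 0 0 Δ₂) 0 0 (fromBlocks Δ₁ 0 0 Δ₃) * pat a b q T c := by
  simp only [pat, fromBlocks_multiply, Matrix.smul_mul, Matrix.mul_smul,
    Matrix.one_mul, Matrix.mul_one, Matrix.zero_mul, Matrix.mul_zero, add_zero, zero_add,
    fromBlocks_add, smul_zero]

end Pat

theorem scaling_main
    (p m ql qr : ℕ) (S : Matrix (Fin 2) (Fin 2) ℂ)
    (hS : S.PosDef) (dF : ℝ) (hdF : 0 < dF)
    (Dl : Matrix ((Fin p ⊕ Fin m) ⊕ (Fin p ⊕ Fin ql))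
          ((Fin p ⊕ Fin m) ⊕ (Fin p ⊕ Fin ql)) ℂ)
    (hDl : Dl = pat p m ql S (dF : ℂ))
    (Dr : Matrix ((Fin m ⊕ Fin p) ⊕ (Fin m ⊕ Fin qr))
          ((Fin m ⊕ Fin p) ⊕ (Fin m ⊕ Fin qr)) ℂ)
    (hDr : Dr = pat m p qr S (dF : ℂ)) :
    Dl.PosDef ∧ Dr.PosDef ∧
      ∀ (hDl' : Dl.PosDef) (hDr' : Dr.PosDef)
        (Δ₁ : Matrix (Fin m) (Fin p) ℂ) (Δ₂ : Matrix (Fin p) (Fin m) ℂ)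
        (Δ₃ : Matrix (Fin qr) (Fin ql) ℂ),
        hDr'.posSemidef.sqrt * fromBlocks (fromBlocks Δ₁ 0 0 Δ₂) 0 0 (fromBlocks Δ₁ 0 0 Δ₃) =
          fromBlocks (fromBlocks Δ₁ 0 0 Δ₂) 0 0 (fromBlocks Δ₁ 0 0 Δ₃) *
            hDl'.posSemidef.sqrt := by
  have hdFc : (0 : ℂ) < (dF : ℂ) := Complex.zero_lt_real.2 hdF
  have hRpsd : Matrix.PosSemidef hS.posSemidef.sqrt := hS.posSemidef.posSemidef_sqrt
  have hRR : hS.posSemidef.sqrt * hS.posSemidef.sqrt = S := hS.posSemidef.sqrt_mul_self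
  set R := hS.posSemidef.sqrt with hR
  set c : ℂ := ((Real.sqrt dF : ℝ) : ℂ) with hcdef
  have hcc : c * c = (dF : ℂ) := by
    rw [hcdef, ← Complex.ofReal_mul, Real.mul_self_sqrt hdF.le]
  have hc0 : 0 ≤ c := Complex.zero_le_real.2 (Real.sqrt_nonneg _)
  refine ⟨hDl ▸ pat_posDef _ _ _ hS hdFc, hDr ▸ pat_posDef _ _ _ hS hdFc, ?_⟩
  intro hDl' hDr' Δ₁ Δ₂ Δ₃
  have hQl : pat p m ql R c = hDl'.posSemidef.sqrt :=
    (pat_posSemidef _ _ _ hRpsd hc0).eq_sqrt_of_sq_eq hDl'.posSemidef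
      (by rw [sq, pat_mul, hRR, hcc, ← hDl])
  have hQr : pat m p qr R c = hDr'.posSemidef.sqrt :=
    (pat_posSemidef _ _ _ hRpsd hc0).eq_sqrt_of_sq_eq hDr'.posSemidef
      (by rw [sq, pat_mul, hRR, hcc, ← hDr])
  rw [← hQl, ← hQr]
  exact pat_comm _ _ _ _ _ _ R c Δ₁ Δ₂ Δ₃


/-- The paper's admissible scaling matrices: for `S ∈ ℂ^{2×2}` Hermitian positive definite and
`d_F > 0`, the structured matrices
`D_l = [[S₁₁·I_p, 0, S₁₂·I_p, 0],[0, d_F·I_m, 0, 0],[S₂₁·I_p, 0, S₂₂·I_p, 0],[0, 0, 0, I_{q_l}]]`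
and
`D_r = [[S₁₁·I_m, 0, S₁₂·I_m, 0],[0, d_F·I_p, 0, 0],[S₂₁·I_m, 0, S₂₂·I_m, 0],[0, 0, 0, I_{q_r}]]`
are Hermitian positive definite, and their unique positive-definite square roots satisfy the
commutation property `D_r^{1/2}·Δ = Δ·D_l^{1/2}` for every structured
`Δ = diag(Δ₁, Δ₂, Δ₁, Δ₃)`. -/
theorem scaling_matrices_posDef_and_sqrt_comm
    (p m ql qr : ℕ) (S : Matrix (Fin 2) (Fin 2) ℂ)
    (hS : S.PosDef) (dF : ℝ) (hdF : 0 < dF)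
    (Dl : Matrix ((Fin p ⊕ Fin m) ⊕ (Fin p ⊕ Fin ql))
          ((Fin p ⊕ Fin m) ⊕ (Fin p ⊕ Fin ql)) ℂ)
    (hDl : Dl = fromBlocks
        (fromBlocks (S 0 0 • 1) 0 0 ((dF : ℂ) • 1))
        (fromBlocks (S 0 1 • 1) 0 0 0)
        (fromBlocks (S 1 0 • 1) 0 0 0)
        (fromBlocks (S 1 1 • 1) 0 0 1))
    (Dr : Matrix ((Fin m ⊕ Fin p) ⊕ (Fin m ⊕ Fin qr))
          ((Fin m ⊕ Fin p) ⊕ (Fin m ⊕ Fin qr)) ℂ)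
    (hDr : Dr = fromBlocks
        (fromBlocks (S 0 0 • 1) 0 0 ((dF : ℂ) • 1))
        (fromBlocks (S 0 1 • 1) 0 0 0)
        (fromBlocks (S 1 0 • 1) 0 0 0)
        (fromBlocks (S 1 1 • 1) 0 0 1)) :
    Dl.PosDef ∧ Dr.PosDef ∧
      ∀ (hDl' : Dl.PosDef) (hDr' : Dr.PosDef)
        (Δ₁ : Matrix (Fin m) (Fin p) ℂ) (Δ₂ : Matrix (Fin p) (Fin m) ℂ)
        (Δ₃ : Matrix (Fin qr) (Fin ql) ℂ),
        hDr'.posSemidef.sqrt * fromBlocks (fromBlocks Δ₁ 0 0 Δ₂) 0 0 (fromBlocks Δ₁ 0 0 Δ₃) =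
          fromBlocks (fromBlocks Δ₁ 0 0 Δ₂) 0 0 (fromBlocks Δ₁ 0 0 Δ₃) *
            hDl'.posSemidef.sqrt := by
  exact scaling_main p m ql qr S hS dF hdF Dl (by rw [hDl]; rfl) Dr (by rw [hDr]; rfl)
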